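/- Let ζ ∈ (0, π/2], Δ = cos ζ, and suppose λ₁,…,λ_N solve the logarithmic Bethe equations p(λ_a)/(2π) − (1/(2πL))Σ_b θ(λ_a − λ_b) + (N+1)/(2L) = ℓ_a/L with all ℓ_a ∈ {1,…,N}, where θ is odd, strictly increasing, and bounded by π−2ζ in absolute value, and p is odd, strictly increasing. If ν is the maximal root, then p(ν)/(2π) < (π−ζ)/π · N/L; consequently ν ≤ p^{−1}(2(π−ζ)N/L) whenever 2(π−ζ)N/L lies in the range of p. -/

import Mathlib

open Real

/-- For `ζ ∈ (0, π/2]`, `Δ = cos ζ`, if `λ₁, …, λ_N` solve the logarithmic Bethe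
equations with all integers `ℓ_a ∈ {1, …, N}`, `θ` odd strictly increasing with
`|θ| ≤ π - 2ζ` and `p` odd strictly increasing, then the maximal root `ν` satisfies
`p(ν)/(2π) < (π-ζ)/π · N/L`; consequently `ν ≤ p⁻¹(2(π-ζ)N/L)` whenever the latter
value is attained by `p`. -/
theorem max_bethe_root_bound (ζ : ℝ) (hζ1 : 0 < ζ) (hζ2 : ζ ≤ π / 2)
    (p θ : ℝ → ℝ)
    (hpodd : ∀ x, p (-x) = -p x) (hpmono : StrictMono p)
    (hθodd : ∀ x, θ (-x) = -θ x) (hθmono : StrictMono θ)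
    (hθbdd : ∀ x, |θ x| ≤ π - 2 * ζ)
    (N L : ℕ) (hN : 0 < N) (hL : 0 < L)
    (lam : Fin N → ℝ) (ℓ : Fin N → ℤ)
    (hℓ : ∀ a, 1 ≤ ℓ a ∧ ℓ a ≤ (N : ℤ))
    (hBethe : ∀ a, p (lam a) / (2 * π) - (1 / (2 * π * L)) * ∑ b, θ (lam a - lam b)
        + ((N : ℝ) + 1) / (2 * L) = (ℓ a : ℝ) / L)
    (a₀ : Fin N) (hmax : ∀ b, lam b ≤ lam a₀) :
    p (lam a₀) / (2 * π) < (π - ζ) / π * ((N : ℝ) / L) ∧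
    ∀ y : ℝ, p y = 2 * (π - ζ) * ((N : ℝ) / L) → lam a₀ ≤ y := by
  have hπ : (0:ℝ) < π := Real.pi_pos
  have hLpos : (0:ℝ) < (L:ℝ) := by exact_mod_cast hL
  have hNpos : (0:ℝ) < (N:ℝ) := by exact_mod_cast hN
  -- sum bound
  have hsum : ∑ b, θ (lam a₀ - lam b) ≤ (N:ℝ) * (π - 2 * ζ) := by
    calc ∑ b, θ (lam a₀ - lam b) ≤ ∑ _b : Fin N, (π - 2 * ζ) :=
          Finset.sum_le_sum fun b _ => (abs_le.mp (hθbdd _)).2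
      _ = (N:ℝ) * (π - 2 * ζ) := by simp [mul_comm]; ring
  have hℓa : (ℓ a₀ : ℝ) ≤ (N:ℝ) := by exact_mod_cast (hℓ a₀).2
  have hB := hBethe a₀
  have h1 : p (lam a₀) / (2 * π)
      = (ℓ a₀ : ℝ) / L - ((N:ℝ)+1)/(2*L) + (1 / (2 * π * L)) * ∑ b, θ (lam a₀ - lam b) := by
    linarith [hB]
  have hmain : p (lam a₀) / (2 * π) < (π - ζ) / π * ((N : ℝ) / L) := by
    have hcoef : (0:ℝ) < 1 / (2 * π * L) := by positivity
    have h2 : (1 / (2 * π * L)) * ∑ b, θ (lam a₀ - lam b)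
        ≤ (1 / (2 * π * L)) * ((N:ℝ) * (π - 2 * ζ)) :=
      mul_le_mul_of_nonneg_left hsum hcoef.le
    have h3 : p (lam a₀) / (2 * π)
        ≤ (N:ℝ) / L - ((N:ℝ)+1)/(2*L) + (1 / (2 * π * L)) * ((N:ℝ) * (π - 2 * ζ)) := by
      have : (ℓ a₀ : ℝ) / L ≤ (N:ℝ) / L := by
        exact div_le_div_of_nonneg_right hℓa hLpos.le |>.trans_eq rfl
      linarith
    have h4 : (N:ℝ) / L - ((N:ℝ)+1)/(2*L) + (1 / (2 * π * L)) * ((N:ℝ) * (π - 2 * ζ))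
        < (π - ζ) / π * ((N : ℝ) / L) := by
      rw [div_sub_div _ _ (by positivity : ((L:ℝ)) ≠ 0) (by positivity : (2*(L:ℝ)) ≠ 0)]
      field_simp
      ring_nf
      nlinarith [mul_pos (pow_pos hLpos 3) (pow_pos hπ 2)]
    linarith
  refine ⟨hmain, fun y hy => ?_⟩
  have hpy : p (lam a₀) < p y := by
    rw [hy]
    have : p (lam a₀) < 2 * π * ((π - ζ) / π * ((N : ℝ) / L)) := by
      rw [div_lt_iff₀ (by positivity : (0:ℝ) < 2 * π)] at hmain
      linarith [hmain]
    calc p (lam a₀) < 2 * π * ((π - ζ) / π * ((N : ℝ) / L)) := this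
      _ = 2 * (π - ζ) * ((N : ℝ) / L) := by field_simp
  exact (hpmono.lt_iff_lt.mp hpy).le
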